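/- arXiv:2301.12384 — 2 statements merged into one kernel-verified Lean document; each statement's English description precedes it below -/
import Mathlib

section
/- For a continuous action φ: G × X → X on a compact metric space X, a Borel probability measure μ is compatible with the persistent shadowing property for φ if and only if supp(μ) ⊆ PSh(φ). -/
open MeasureTheory

def ContGroupAction (G : Type*) [Group G] (X : Type*) [MetricSpace X] (φ : G → X → X) : Prop :=
  (∀ g : G, Continuous (φ g)) ∧ (∀ g h : G, ∀ x : X, φ (g * h) x = φ g (φ h x)) ∧
    (∀ x : X, φ (1 : G) x = x)

def IsPseudoOrbit {G : Type*} [Group G] {X : Type*} [MetricSpace X]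
    (S : Set G) (ψ : G → X → X) (δ : ℝ) (f : G → X) : Prop :=
  ∀ s ∈ S, ∀ g : G, dist (f (s * g)) (ψ s (f g)) < δ

def CloseActions {G : Type*} [Group G] {X : Type*} [MetricSpace X]
    (S : Set G) (φ ψ : G → X → X) (δ : ℝ) : Prop :=
  ∀ s ∈ S, ∀ x : X, dist (φ s x) (ψ s x) < δ

def PersistentShadowing {G : Type*} [Group G] {X : Type*} [MetricSpace X]
    (S : Set G) (φ : G → X → X) : Prop :=
  ∀ ε > (0:ℝ), ∃ δ > (0:ℝ), ∀ ψ : G → X → X, ContGroupAction G X ψ → CloseActions S φ ψ δ →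
    ∀ f : G → X, IsPseudoOrbit S ψ δ f → ∃ p : X, ∀ g : G, dist (f g) (ψ g p) < ε

def Shadowing {G : Type*} [Group G] {X : Type*} [MetricSpace X]
    (S : Set G) (φ : G → X → X) : Prop :=
  ∀ ε > (0:ℝ), ∃ δ > (0:ℝ), ∀ f : G → X, IsPseudoOrbit S φ δ f →
    ∃ p : X, ∀ g : G, dist (f g) (φ g p) < ε

def PShSet {G : Type*} [Group G] {X : Type*} [MetricSpace X]
    (S : Set G) (φ : G → X → X) (δ ε : ℝ) : Set X :=
  {x | ∀ ψ : G → X → X, ContGroupAction G X ψ → CloseActions S φ ψ δ →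
    ∀ f : G → X, IsPseudoOrbit S ψ δ f → f 1 = x →
      ∃ p : X, ∀ g : G, dist (f g) (ψ g p) < ε}

def PShPoint {G : Type*} [Group G] {X : Type*} [MetricSpace X]
    (S : Set G) (φ : G → X → X) (x : X) : Prop :=
  ∀ ε > (0:ℝ), ∃ δ > (0:ℝ), x ∈ PShSet S φ δ ε

def ShPoint {G : Type*} [Group G] {X : Type*} [MetricSpace X]
    (S : Set G) (φ : G → X → X) (x : X) : Prop :=
  ∀ ε > (0:ℝ), ∃ δ > (0:ℝ), ∀ f : G → X, IsPseudoOrbit S φ δ f → f 1 = x →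
    ∃ p : X, ∀ g : G, dist (f g) (φ g p) < ε

def UPersisBetaPoint {G : Type*} [Group G] {X : Type*} [MetricSpace X]
    (S : Set G) (φ : G → X → X) (x : X) : Prop :=
  ∀ ε > (0:ℝ), ∃ δ > (0:ℝ), ∀ ψ : G → X → X, ContGroupAction G X ψ → CloseActions S φ ψ δ →
    ∀ x' : X, dist x' x < δ → ∃ y : X, ∀ g : G, dist (φ g x') (ψ g y) < ε

def BetaPersistent {G : Type*} [Group G] {X : Type*} [MetricSpace X]
    (S : Set G) (φ : G → X → X) : Prop :=
  ∀ ε > (0:ℝ), ∃ δ > (0:ℝ), ∀ ψ : G → X → X, ContGroupAction G X ψ → CloseActions S φ ψ δ →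
    ∀ x : X, ∃ y : X, ∀ g : G, dist (φ g x) (ψ g y) < ε

def CompatiblePSh {G : Type*} [Group G] {X : Type*} [MetricSpace X] [MeasurableSpace X]
    (S : Set G) (φ : G → X → X) (μ : Measure X) : Prop :=
  ∀ ε > (0:ℝ), ∃ δ > (0:ℝ), ∀ A : Set X, MeasurableSet A → 0 < μ A →
    (A ∩ PShSet S φ δ ε).Nonempty

def MeasSupp {X : Type*} [MetricSpace X] [MeasurableSpace X] (μ : Measure X) : Set X :=
  {x | ∀ U : Set X, IsOpen U → x ∈ U → 0 < μ U}

section helper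
variable {G : Type*} [Group G] {X : Type*} [MetricSpace X]

lemma finset_exists_pos_le {α : Type*} (t : Finset α) (r : α → ℝ) (hr : ∀ a ∈ t, 0 < r a) :
    ∃ δ > (0:ℝ), ∀ a ∈ t, δ ≤ r a := by
  classical
  induction t using Finset.induction_on with
  | empty => exact ⟨1, one_pos, by simp⟩
  | @insert a t ha ih =>
    obtain ⟨δ, hδ, hle⟩ := ih (fun b hb => hr b (Finset.mem_insert_of_mem hb))
    refine ⟨min δ (r a), lt_min hδ (hr a (Finset.mem_insert_self a t)), ?_⟩
    intro b hb
    rcases Finset.mem_insert.mp hb with rfl | hb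
    · exact min_le_right _ _
    · exact le_trans (min_le_left _ _) (hle b hb)

lemma unif_cont [CompactSpace X] (S : Set G) (hSfin : S.Finite) (φ : G → X → X)
    (hc : ∀ g, Continuous (φ g)) {δ : ℝ} (hδ : 0 < δ) :
    ∃ η > (0:ℝ), ∀ s ∈ S, ∀ a b : X, dist a b < η → dist (φ s a) (φ s b) < δ := by
  classical
  have H : ∀ s : G, ∃ η > (0:ℝ), ∀ a b : X, dist a b < η → dist (φ s a) (φ s b) < δ := by
    intro s
    obtain ⟨η, hη, h⟩ := Metric.uniformContinuous_iff.mp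
      (CompactSpace.uniformContinuous_of_continuous (hc s)) δ hδ
    exact ⟨η, hη, fun a b hab => h hab⟩
  choose η hη1 hη2 using H
  obtain ⟨η0, h0, hle⟩ := finset_exists_pos_le hSfin.toFinset η (fun a _ => hη1 a)
  exact ⟨η0, h0, fun s hs a b hab =>
    hη2 s a b (lt_of_lt_of_le hab (hle s (hSfin.mem_toFinset.mpr hs)))⟩

lemma PShSet_mono (S : Set G) (φ : G → X → X) {δ₁ δ₂ ε₁ ε₂ : ℝ} (hδ : δ₁ ≤ δ₂) (hε : ε₁ ≤ ε₂) :
    PShSet S φ δ₂ ε₁ ⊆ PShSet S φ δ₁ ε₂ := by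
  intro x hx ψ hψ hclose f hf h1
  obtain ⟨p, hp⟩ := hx ψ hψ (fun s hs z => lt_of_lt_of_le (hclose s hs z) hδ)
    f (fun s hs g => lt_of_lt_of_le (hf s hs g) hδ) h1
  exact ⟨p, fun g => lt_of_lt_of_le (hp g) hε⟩

lemma transfer [CompactSpace X] (S : Set G) (hSfin : S.Finite) (φ : G → X → X)
    (hφ : ContGroupAction G X φ) {ε δ : ℝ} (hε : 0 < ε) (hδ : 0 < δ) :
    ∃ δ' > (0:ℝ), ∀ x y : X, dist x y < δ' → y ∈ PShSet S φ δ (ε/2) →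
      x ∈ PShSet S φ δ' ε := by
  classical
  obtain ⟨η, hη, hunif⟩ := unif_cont S hSfin φ hφ.1 (show (0:ℝ) < δ/4 by linarith)
  set δ' := min η (min (δ/8) (ε/2)) with hδ'def
  have hδ'pos : 0 < δ' := lt_min hη (lt_min (by linarith) (by linarith))
  have hδ'η : δ' ≤ η := min_le_left _ _
  have hδ'8 : δ' ≤ δ/8 := le_trans (min_le_right _ _) (min_le_left _ _)
  have hδ'ε : δ' ≤ ε/2 := le_trans (min_le_right _ _) (min_le_right _ _)
  have hδ'δ : δ' ≤ δ := by linarith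
  refine ⟨δ', hδ'pos, ?_⟩
  intro x y hxy hy ψ hψ hclose f hf h1
  set f' : G → X := fun g => if g = 1 then y else f g with hf'def
  have hf'1 : f' 1 = y := by simp [hf'def]
  have hcloseδ : CloseActions S φ ψ δ := fun s hs z => lt_of_lt_of_le (hclose s hs z) hδ'δ
  have hpo : IsPseudoOrbit S ψ δ f' := by
    intro s hs g
    by_cases hs1 : s = 1
    · subst hs1
      rw [one_mul, hψ.2.2]
      simpa using hδ
    · by_cases hg1 : g = 1
      · subst hg1
        rw [mul_one]
        have hsne : f' s = f s := by simp [hf'def, hs1]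
        rw [hsne, hf'1]
        have hb1 : dist (f s) (ψ s x) < δ' := by
          have := hf s hs 1
          rwa [mul_one, h1] at this
        have hb2 : dist (ψ s x) (φ s x) < δ' := by
          have := hclose s hs x
          rwa [dist_comm] at this
        have hb3 : dist (φ s x) (φ s y) < δ/4 := hunif s hs x y (lt_of_lt_of_le hxy hδ'η)
        have hb4 : dist (φ s y) (ψ s y) < δ' := hclose s hs y
        have ht1 := dist_triangle (f s) (ψ s x) (ψ s y)
        have ht2 := dist_triangle4 (ψ s x) (φ s x) (φ s y) (ψ s y)
        linarith
      · by_cases hsg : s * g = 1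
        · have he1 : f' (s*g) = y := by simp [hf'def, hsg]
          have he2 : f' g = f g := by simp [hf'def, hg1]
          rw [he1, he2]
          have h0 : dist (f (s*g)) (ψ s (f g)) < δ' := hf s hs g
          rw [hsg, h1] at h0
          have ht := dist_triangle y x (ψ s (f g))
          have hyx : dist y x < δ' := by rwa [dist_comm] at hxy
          linarith
        · have he1 : f' (s*g) = f (s*g) := by simp [hf'def, hsg]
          have he2 : f' g = f g := by simp [hf'def, hg1]
          rw [he1, he2]
          exact lt_of_lt_of_le (hf s hs g) hδ'δ
  obtain ⟨p, hp⟩ := hy ψ hψ hcloseδ f' hpo hf'1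
  refine ⟨p, fun g => ?_⟩
  by_cases hg1 : g = 1
  · subst hg1
    rw [h1, hψ.2.2]
    have hyp := hp 1
    rw [hf'1, hψ.2.2] at hyp
    have ht := dist_triangle x y p
    linarith
  · have := hp g
    rw [show f' g = f g by simp [hf'def, hg1]] at this
    linarith

lemma isClosed_measSupp [MeasurableSpace X] (μ : Measure X) : IsClosed (MeasSupp μ) := by
  rw [← isOpen_compl_iff, isOpen_iff_mem_nhds]
  intro x hx
  simp only [MeasSupp, Set.mem_compl_iff, Set.mem_setOf_eq] at hx
  push_neg at hx
  obtain ⟨U, hUo, hxU, hU0⟩ := hx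
  refine Filter.mem_of_superset (hUo.mem_nhds hxU) (fun z hz hzs => ?_)
  exact (hzs U hUo hz).ne' (le_zero_iff.mp hU0)

lemma meas_supp_compl [CompactSpace X] [MeasurableSpace X] (μ : Measure X) :
    μ (MeasSupp μ)ᶜ = 0 := by
  obtain ⟨T, hTc, hTsub, hTU⟩ := TopologicalSpace.isOpen_sUnion_countable
    {U : Set X | IsOpen U ∧ μ U = 0} (fun U hU => hU.1)
  have hU0 : μ (⋃₀ T) = 0 := by
    rw [Set.sUnion_eq_biUnion]
    exact (measure_biUnion_null_iff hTc).mpr (fun U hU => (hTsub hU).2)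
  refine measure_mono_null ?_ hU0
  rw [hTU]
  intro x hx
  simp only [MeasSupp, Set.mem_compl_iff, Set.mem_setOf_eq] at hx
  push_neg at hx
  obtain ⟨U, hUo, hxU, hU0'⟩ := hx
  exact ⟨U, ⟨hUo, le_zero_iff.mp hU0'⟩, hxU⟩

lemma meets_supp [CompactSpace X] [MeasurableSpace X] (μ : Measure X)
    {A : Set X} (hA : 0 < μ A) : (A ∩ MeasSupp μ).Nonempty := by
  by_contra h
  rw [Set.not_nonempty_iff_eq_empty] at h
  have hsub : A ⊆ (MeasSupp μ)ᶜ := fun x hx hxs =>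
    Set.eq_empty_iff_forall_notMem.mp h x ⟨hx, hxs⟩
  exact hA.ne' (measure_mono_null hsub (meas_supp_compl μ))

end helper

theorem stmt16 {G : Type*} [Group G] {X : Type*} [MetricSpace X] [CompactSpace X]
    [MeasurableSpace X] [BorelSpace X]
    (S : Set G) (hSfin : S.Finite) (hSsym : ∀ s ∈ S, s⁻¹ ∈ S)
    (hSgen : Subgroup.closure S = ⊤)
    (φ : G → X → X) (hφ : ContGroupAction G X φ)
    (μ : Measure X) [IsProbabilityMeasure μ] :
    CompatiblePSh S φ μ ↔ MeasSupp μ ⊆ {x : X | PShPoint S φ x} := by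
  constructor
  · intro h x hx ε hε
    obtain ⟨δ, hδ, hA⟩ := h (ε/2) (by linarith)
    obtain ⟨δ', hδ'pos, htr⟩ := transfer S hSfin φ hφ hε hδ
    obtain ⟨y, hyball, hyP⟩ := hA (Metric.ball x δ') Metric.isOpen_ball.measurableSet
      (hx _ Metric.isOpen_ball (Metric.mem_ball_self hδ'pos))
    exact ⟨δ', hδ'pos, htr x y (by rw [dist_comm]; exact Metric.mem_ball.mp hyball) hyP⟩
  · intro h ε hε
    have key : ∀ x : X, x ∈ MeasSupp μ →
        ∃ δ' > (0:ℝ), ∀ z : X, dist z x < δ' → z ∈ PShSet S φ δ' ε := by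
      intro x hx
      obtain ⟨δx, hδx, hxP⟩ := h hx (ε/2) (by linarith)
      obtain ⟨δ', hδ'pos, htr⟩ := transfer S hSfin φ hφ hε hδx
      exact ⟨δ', hδ'pos, fun z hz => htr z x hz hxP⟩
    choose! r hr1 hr2 using key
    have hK : IsCompact (MeasSupp μ) := (isClosed_measSupp μ).isCompact
    obtain ⟨t, htK, htcov⟩ := hK.elim_nhds_subcover (fun x => Metric.ball x (r x))
      (fun x hx => Metric.ball_mem_nhds x (hr1 x hx))
    obtain ⟨δ, hδpos, hδle⟩ := finset_exists_pos_le t r (fun a ha => hr1 a (htK a ha))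
    refine ⟨δ, hδpos, ?_⟩
    intro A _ hApos
    obtain ⟨z, hzA, hzK⟩ := meets_supp μ hApos
    have hmem := htcov hzK
    simp only [Set.mem_iUnion] at hmem
    obtain ⟨x, hxt, hzx⟩ := hmem
    have hz' : z ∈ PShSet S φ (r x) ε := hr2 x (htK x hxt) z (Metric.mem_ball.mp hzx)
    exact ⟨z, hzA, PShSet_mono S φ (hδle x hxt) le_rfl hz'⟩
end

section
/- For a continuous action φ: G × X → X on a compact metric space, a Borel probability measure μ satisfies μ(closure(PSh(φ))) = 1 if and only if μ lies in the weak* closure of M_{PSh}(X,φ), the set of measures compatible with the persistent shadowing property. -/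
open MeasureTheory BoundedContinuousFunction

lemma PShSet_anti' {G : Type*} [Group G] {X : Type*} [MetricSpace X]
    (S : Set G) (φ : G → X → X) {δ δ' ε : ℝ} (h : δ' ≤ δ) :
    PShSet S φ δ ε ⊆ PShSet S φ δ' ε := by
  intro x hx ψ hψ hclose f hf h1
  exact hx ψ hψ (fun s hs z => (hclose s hs z).trans_le h) f
    (fun s hs g => (hf s hs g).trans_le h) h1

lemma exists_modulus' {G : Type*} [Group G] {X : Type*} [MetricSpace X] [CompactSpace X]
    {S : Set G} (hSfin : S.Finite) {φ : G → X → X} (hφc : ∀ g : G, Continuous (φ g))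
    {r : ℝ} (hr : 0 < r) :
    ∃ η > (0:ℝ), ∀ s ∈ S, ∀ a b : X, dist a b < η → dist (φ s a) (φ s b) < r := by
  classical
  have h : ∀ s : hSfin.toFinset, ∃ η > (0:ℝ), ∀ a b : X, dist a b < η →
      dist (φ (s : G) a) (φ (s : G) b) < r := by
    intro s
    have := Metric.uniformContinuous_iff.mp
      (CompactSpace.uniformContinuous_of_continuous (hφc (s : G))) r hr
    obtain ⟨η, hη, hd⟩ := this
    exact ⟨η, hη, fun a b hab => hd hab⟩
  choose η hη1 hη2 using h
  rcases isEmpty_or_nonempty hSfin.toFinset with he | hne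
  · refine ⟨1, one_pos, fun s hs => ?_⟩
    exact (he.false ⟨s, hSfin.mem_toFinset.mpr hs⟩).elim
  · refine ⟨Finset.univ.inf' Finset.univ_nonempty η, ?_, ?_⟩
    · exact (Finset.lt_inf'_iff _).mpr (fun s _ => hη1 s)
    · intro s hs a b hab
      refine hη2 ⟨s, hSfin.mem_toFinset.mpr hs⟩ a b (lt_of_lt_of_le hab ?_)
      exact Finset.inf'_le _ (Finset.mem_univ _)

lemma pshPoint_of_pos_ball' {G : Type*} [Group G] {X : Type*} [MetricSpace X] [CompactSpace X]
    [MeasurableSpace X] [BorelSpace X]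
    {S : Set G} (hSfin : S.Finite) {φ : G → X → X} (hφ : ContGroupAction G X φ)
    {ν : Measure X} (hν : CompatiblePSh S φ ν) {x : X}
    (hx : ∀ r > (0:ℝ), 0 < ν (Metric.ball x r)) : PShPoint S φ x := by
  intro ε hε
  obtain ⟨δ, hδ, hA⟩ := hν (ε/2) (by positivity)
  obtain ⟨η0, hη0, hmod⟩ := exists_modulus' hSfin hφ.1 (show (0:ℝ) < δ/8 by positivity)
  set η : ℝ := min (min η0 (δ/8)) (ε/2) with hηdef
  have hηpos : 0 < η := by
    apply lt_min (lt_min hη0 (by positivity)) (by positivity)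
  obtain ⟨y, hyA, hy⟩ := hA (Metric.ball x η) Metric.isOpen_ball.measurableSet (hx η hηpos)
  have hdyx : dist y x < η := Metric.mem_ball.mp hyA
  have hηle1 : η ≤ η0 := le_trans (min_le_left _ _) (min_le_left _ _)
  have hηle2 : η ≤ δ/8 := le_trans (min_le_left _ _) (min_le_right _ _)
  have hηle3 : η ≤ ε/2 := min_le_right _ _
  refine ⟨δ/8, by positivity, ?_⟩
  intro ψ hψ hclose f hf hf1
  classical
  set f' : G → X := fun g => if g = 1 then y else f g with hf'def
  have hf'1 : f' 1 = y := if_pos rfl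
  have hclose' : CloseActions S φ ψ δ := fun s hs z => (hclose s hs z).trans_le (by linarith)
  have hψxy : ∀ s ∈ S, dist (ψ s x) (ψ s y) < 3 * (δ/8) := by
    intro s hs
    calc dist (ψ s x) (ψ s y) ≤ dist (ψ s x) (φ s x) + dist (φ s x) (φ s y)
          + dist (φ s y) (ψ s y) := dist_triangle4 _ _ _ _
      _ < δ/8 + δ/8 + δ/8 := by
          refine add_lt_add (add_lt_add ?_ ?_) (hclose s hs y)
          · rw [dist_comm]; exact hclose s hs x
          · exact hmod s hs x y (by rw [dist_comm]; exact lt_of_lt_of_le hdyx hηle1)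
      _ = 3 * (δ/8) := by ring
  have hpo : IsPseudoOrbit S ψ δ f' := by
    intro s hs g
    by_cases hg : g = 1
    · subst hg
      by_cases hs1 : s = 1
      · subst hs1
        have : f' (1 * 1) = y := by simp [hf'def]
        rw [this, hf'1]
        have h1 : dist y (ψ 1 y) = dist (φ 1 y) (ψ 1 y) := by rw [hφ.2.2 y]
        rw [h1]
        exact lt_of_lt_of_le (hclose' 1 hs y) le_rfl
      · have h1 : f' (s * 1) = f s := by simp [hf'def, hs1]
        rw [h1, hf'1]
        have hfs : dist (f s) (ψ s x) < δ/8 := by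
          have := hf s hs 1
          rwa [mul_one, hf1] at this
        calc dist (f s) (ψ s y) ≤ dist (f s) (ψ s x) + dist (ψ s x) (ψ s y) :=
              dist_triangle _ _ _
          _ < δ/8 + 3 * (δ/8) := add_lt_add hfs (hψxy s hs)
          _ ≤ δ := by linarith
    · by_cases hsg : s * g = 1
      · have h1 : f' (s * g) = y := by rw [hsg, hf'1]
        have h2 : f' g = f g := if_neg hg
        rw [h1, h2]
        have hfx : dist x (ψ s (f g)) < δ/8 := by
          have := hf s hs g
          rwa [hsg, hf1] at this
        calc dist y (ψ s (f g)) ≤ dist y x + dist x (ψ s (f g)) := dist_triangle _ _ _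
          _ < η + δ/8 := add_lt_add hdyx hfx
          _ ≤ δ := by linarith
      · have h1 : f' (s * g) = f (s * g) := if_neg hsg
        have h2 : f' g = f g := if_neg hg
        rw [h1, h2]
        exact (hf s hs g).trans_le (by linarith)
  obtain ⟨p, hp⟩ := hy ψ hψ hclose' f' hpo hf'1
  refine ⟨p, fun g => ?_⟩
  by_cases hg : g = 1
  · subst hg
    have := hp 1
    rw [hf'1] at this
    calc dist (f 1) (ψ 1 p) ≤ dist (f 1) y + dist y (ψ 1 p) := dist_triangle _ _ _
      _ < η + ε/2 := by
          refine add_lt_add ?_ this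
          rw [hf1, dist_comm]; exact hdyx
      _ ≤ ε := by linarith
  · have := hp g
    have h2 : f' g = f g := if_neg hg
    rw [h2] at this
    exact this.trans_le (by linarith)

lemma compat_full' {G : Type*} [Group G] {X : Type*} [MetricSpace X] [CompactSpace X]
    [MeasurableSpace X] [BorelSpace X]
    {S : Set G} (hSfin : S.Finite) {φ : G → X → X} (hφ : ContGroupAction G X φ)
    {ν : Measure X} [IsProbabilityMeasure ν] (hν : CompatiblePSh S φ ν) :
    ν (closure {x : X | PShPoint S φ x}) = 1 := by
  set C := closure {x : X | PShPoint S φ x} with hC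
  rw [← prob_compl_eq_zero_iff isClosed_closure.measurableSet]
  set 𝒰 : Set (Set X) := {U | IsOpen U ∧ ν U = 0} with h𝒰
  obtain ⟨T, hTc, hT𝒰, hTU⟩ := TopologicalSpace.isOpen_sUnion_countable 𝒰 (fun U hU => hU.1)
  have hW : ν (⋃₀ 𝒰) = 0 := by
    rw [← hTU]
    exact (measure_sUnion_null_iff hTc).mpr (fun U hU => (hT𝒰 hU).2)
  refine measure_mono_null ?_ hW
  intro z hz
  by_contra hzW
  have hball : ∀ r > (0:ℝ), 0 < ν (Metric.ball z r) := by
    intro r hr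
    rcases eq_or_ne (ν (Metric.ball z r)) 0 with h0 | h0
    · exfalso
      apply hzW
      refine Set.mem_sUnion.mpr ⟨Metric.ball z r, ?_, Metric.mem_ball_self hr⟩
      exact ⟨Metric.isOpen_ball, h0⟩
    · exact h0.bot_lt
  exact hz (subset_closure (pshPoint_of_pos_ball' hSfin hφ hν hball))

lemma approx' {G : Type*} [Group G] {X : Type*} [MetricSpace X] [CompactSpace X]
    [MeasurableSpace X] [BorelSpace X]
    {S : Set G} {φ : G → X → X} (μ : ProbabilityMeasure X)
    (hC : μ.toMeasure (closure {x : X | PShPoint S φ x}) = 1) {r : ℝ} (hr : 0 < r) :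
    ∃ ν : ProbabilityMeasure X, CompatiblePSh S φ ν.toMeasure ∧
      ∀ (f : X →ᵇ ℝ) (ε' : ℝ), 0 ≤ ε' → (∀ a b : X, dist a b < r → |f a - f b| ≤ ε') →
        abs ((∫ z, f z ∂ν.toMeasure) - ∫ z, f z ∂μ.toMeasure) ≤ ε' := by
  classical
  set P : Set X := {x : X | PShPoint S φ x} with hP
  set C : Set X := closure P with hCdef
  have hCmeas : MeasurableSet C := isClosed_closure.measurableSet
  have hCcompact : IsCompact C := isClosed_closure.isCompact
  have hcov : C ⊆ ⋃ p : P, Metric.ball (p : X) r := by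
    intro c hc
    obtain ⟨p, hpP, hpd⟩ := Metric.mem_closure_iff.mp hc r hr
    exact Set.mem_iUnion.mpr ⟨⟨p, hpP⟩, Metric.mem_ball.mpr hpd⟩
  obtain ⟨t, ht⟩ := hCcompact.elim_finite_subcover (fun p : P => Metric.ball (p : X) r)
    (fun _ => Metric.isOpen_ball) hcov
  set m : ℕ := t.card with hm
  set e := t.equivFin with he
  set x : Fin m → X := fun i => ((e.symm i : {p : P // p ∈ t}) : P) with hx
  have hxP : ∀ i, PShPoint S φ (x i) := fun i => ((e.symm i : {p : P // p ∈ t}) : P).2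
  have hcov2 : C ⊆ ⋃ i, Metric.ball (x i) r := by
    intro c hc
    obtain ⟨p, hpt⟩ := Set.mem_iUnion.mp (ht hc)
    obtain ⟨hptm, hcb⟩ := Set.mem_iUnion.mp hpt
    refine Set.mem_iUnion.mpr ⟨e ⟨p, hptm⟩, ?_⟩
    have : x (e ⟨p, hptm⟩) = (p : X) := by
      simp only [hx, Equiv.symm_apply_apply]
    rwa [this]
  set A : Fin m → Set X := fun i =>
    (C ∩ Metric.ball (x i) r) \ ⋃ (j : Fin m) (_ : j < i), Metric.ball (x j) r with hA
  have hAmeas : ∀ i, MeasurableSet (A i) := by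
    intro i
    exact ((hCmeas.inter Metric.isOpen_ball.measurableSet).diff
      (MeasurableSet.iUnion (fun j => MeasurableSet.iUnion
        (fun _ => Metric.isOpen_ball.measurableSet))))
  have hAdisj : Pairwise (Function.onFun Disjoint A) := by
    intro i j hij
    rcases hij.lt_or_gt with h | h
    · refine Set.disjoint_left.mpr (fun z hzi hzj => ?_)
      exact hzj.2 (Set.mem_iUnion.mpr ⟨i, Set.mem_iUnion.mpr ⟨h, hzi.1.2⟩⟩)
    · refine Set.disjoint_left.mpr (fun z hzi hzj => ?_)
      exact hzi.2 (Set.mem_iUnion.mpr ⟨j, Set.mem_iUnion.mpr ⟨h, hzj.1.2⟩⟩)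
  have hAsub : ∀ i, A i ⊆ Metric.ball (x i) r := fun i z hz => hz.1.2
  have hAunion : (⋃ i, A i) = C := by
    apply Set.Subset.antisymm
    · exact Set.iUnion_subset (fun i z hz => hz.1.1)
    · intro c hc
      have hne : (Finset.univ.filter (fun i => c ∈ Metric.ball (x i) r)).Nonempty := by
        obtain ⟨i, hi⟩ := Set.mem_iUnion.mp (hcov2 hc)
        exact ⟨i, Finset.mem_filter.mpr ⟨Finset.mem_univ _, hi⟩⟩
      obtain ⟨i₀, hi₀mem, hi₀min⟩ := Finset.exists_min_image _ id hne
      have hi₀ball : c ∈ Metric.ball (x i₀) r := (Finset.mem_filter.mp hi₀mem).2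
      refine Set.mem_iUnion.mpr ⟨i₀, ⟨⟨hc, hi₀ball⟩, ?_⟩⟩
      intro hc2
      obtain ⟨j, hj⟩ := Set.mem_iUnion.mp hc2
      obtain ⟨hji, hjb⟩ := Set.mem_iUnion.mp hj
      exact absurd (hi₀min j (Finset.mem_filter.mpr ⟨Finset.mem_univ _, hjb⟩)) (not_le.mpr hji)
  have hsum : ∑ i, μ.toMeasure (A i) = 1 := by
    rw [← tsum_fintype (L := SummationFilter.unconditional _), ← measure_iUnion hAdisj hAmeas, hAunion, hC]
  set ν₀ : Measure X := ∑ i, μ.toMeasure (A i) • Measure.dirac (x i) with hν₀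
  have hν₀app : ∀ B : Set X, ν₀ B = ∑ i, μ.toMeasure (A i) * Measure.dirac (x i) B := by
    intro B
    simp [hν₀, Measure.finset_sum_apply, Measure.smul_apply, smul_eq_mul]
  have hν₀prob : IsProbabilityMeasure ν₀ := by
    constructor
    rw [hν₀app]
    simp [measure_univ, hsum]
  set ν : ProbabilityMeasure X := ⟨ν₀, hν₀prob⟩ with hν
  have hmne : Nonempty (Fin m) := by
    have hCne : C.Nonempty := by
      by_contra hne
      rw [Set.not_nonempty_iff_eq_empty] at hne
      rw [hne] at hC
      simp at hC
    obtain ⟨c, hc⟩ := hCne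
    obtain ⟨i, _⟩ := Set.mem_iUnion.mp (hcov2 hc)
    exact ⟨i⟩
  refine ⟨ν, ?_, ?_⟩
  · intro ε hε
    choose δi hδi hδimem using fun i => hxP i ε hε
    refine ⟨Finset.univ.inf' Finset.univ_nonempty δi, ?_, ?_⟩
    · exact (Finset.lt_inf'_iff _).mpr (fun i _ => hδi i)
    · intro B hB hBpos
      have : ∃ i, x i ∈ B := by
        by_contra hno
        push_neg at hno
        have : ν₀ B = 0 := by
          rw [hν₀app]
          refine Finset.sum_eq_zero (fun i _ => ?_)
          rw [Measure.dirac_apply' _ hB, Set.indicator_of_notMem (hno i), mul_zero]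
        rw [show ν.toMeasure = ν₀ from rfl] at hBpos
        exact absurd this hBpos.ne'
      obtain ⟨i, hi⟩ := this
      exact ⟨x i, hi, PShSet_anti' S φ (Finset.inf'_le _ (Finset.mem_univ i)) (hδimem i)⟩
  · intro f ε' hε' hmod
    have hint : ∀ i, Integrable f (μ.toMeasure (A i) • Measure.dirac (x i)) := by
      intro i
      have h1 : IsFiniteMeasure (μ.toMeasure (A i) • Measure.dirac (x i)) := by
        constructor
        rw [Measure.smul_apply, smul_eq_mul, measure_univ, mul_one]
        exact lt_of_le_of_lt prob_le_one ENNReal.one_lt_top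
      exact f.integrable _
    have hIν : (∫ z, f z ∂ν.toMeasure) = ∑ i, (μ.toMeasure (A i)).toReal * f (x i) := by
      rw [show ν.toMeasure = ν₀ from rfl, hν₀, integral_finset_sum_measure (fun i _ => hint i)]
      refine Finset.sum_congr rfl (fun i _ => ?_)
      rw [integral_smul_measure, integral_dirac, smul_eq_mul]
    have hintμ : Integrable f μ.toMeasure := f.integrable _
    have hIμ : (∫ z, f z ∂μ.toMeasure) = ∑ i, ∫ z in A i, f z ∂μ.toMeasure := by
      have hcompl : μ.toMeasure Cᶜ = 0 := by
        rw [measure_compl hCmeas (measure_ne_top _ _), measure_univ, hC, tsub_self]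
      have h1 : (∫ z in C, f z ∂μ.toMeasure) + ∫ z in Cᶜ, f z ∂μ.toMeasure
          = ∫ z, f z ∂μ.toMeasure := integral_add_compl hCmeas hintμ
      have h2 : (∫ z in Cᶜ, f z ∂μ.toMeasure) = 0 := by
        exact setIntegral_measure_zero _ hcompl
      have h3 : (∫ z in C, f z ∂μ.toMeasure) = ∑ i, ∫ z in A i, f z ∂μ.toMeasure := by
        rw [← hAunion, integral_iUnion hAmeas hAdisj hintμ.integrableOn, tsum_fintype]
      rw [← h1, h2, add_zero, h3]
    rw [hIν, hIμ, ← Finset.sum_sub_distrib]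
    have hterm : ∀ i, |(μ.toMeasure (A i)).toReal * f (x i) - ∫ z in A i, f z ∂μ.toMeasure|
        ≤ ε' * (μ.toMeasure (A i)).toReal := by
      intro i
      have hfin : μ.toMeasure (A i) < ⊤ := measure_lt_top _ _
      have hdiff : (μ.toMeasure (A i)).toReal * f (x i) - (∫ z in A i, f z ∂μ.toMeasure)
          = -∫ z in A i, (f z - f (x i)) ∂μ.toMeasure := by
        rw [integral_sub hintμ.integrableOn (integrableOn_const hfin.ne)]
        rw [setIntegral_const, smul_eq_mul, Measure.real]
        ring
      rw [hdiff, abs_neg, ← Real.norm_eq_abs]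
      refine norm_setIntegral_le_of_norm_le_const hfin (fun z hz => ?_)
      rw [Real.norm_eq_abs]
      exact hmod z (x i) (Metric.mem_ball.mp (hAsub i hz))
    calc |∑ i, ((μ.toMeasure (A i)).toReal * f (x i) - ∫ z in A i, f z ∂μ.toMeasure)|
        ≤ ∑ i, |(μ.toMeasure (A i)).toReal * f (x i) - ∫ z in A i, f z ∂μ.toMeasure| :=
          Finset.abs_sum_le_sum_abs _ _
      _ ≤ ∑ i, ε' * (μ.toMeasure (A i)).toReal := Finset.sum_le_sum (fun i _ => hterm i)
      _ = ε' * ∑ i, (μ.toMeasure (A i)).toReal := by rw [Finset.mul_sum]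
      _ = ε' := by
          rw [← ENNReal.toReal_sum (fun i _ => measure_ne_top _ _), hsum]
          simp

theorem stmt17 {G : Type*} [Group G] {X : Type*} [MetricSpace X] [CompactSpace X]
    [MeasurableSpace X] [BorelSpace X]
    (S : Set G) (hSfin : S.Finite) (hSsym : ∀ s ∈ S, s⁻¹ ∈ S)
    (hSgen : Subgroup.closure S = ⊤)
    (φ : G → X → X) (hφ : ContGroupAction G X φ)
    (μ : ProbabilityMeasure X) :
    μ.toMeasure (closure {x : X | PShPoint S φ x}) = 1 ↔
      μ ∈ closure {ν : ProbabilityMeasure X | CompatiblePSh S φ ν.toMeasure} := by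
  set C : Set X := closure {x : X | PShPoint S φ x} with hCdef
  set T : Set (ProbabilityMeasure X) := {ν | CompatiblePSh S φ ν.toMeasure} with hT
  constructor
  · intro hC
    -- construct approximating sequence
    have hstep : ∀ n : ℕ, ∃ ν : ProbabilityMeasure X, CompatiblePSh S φ ν.toMeasure ∧
        ∀ (f : X →ᵇ ℝ) (ε' : ℝ), 0 ≤ ε' →
          (∀ a b : X, dist a b < 1/(n+1) → |f a - f b| ≤ ε') →
          abs ((∫ z, f z ∂ν.toMeasure) - ∫ z, f z ∂μ.toMeasure) ≤ ε' := by
      intro n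
      exact approx' μ hC (by positivity)
    choose ν hν1 hν2 using hstep
    have htend : Filter.Tendsto ν Filter.atTop (nhds μ) := by
      rw [ProbabilityMeasure.tendsto_iff_forall_integral_tendsto]
      intro f
      rw [Metric.tendsto_atTop]
      intro ε hε
      obtain ⟨r₀, hr₀, hfr⟩ := Metric.uniformContinuous_iff.mp (CompactSpace.uniformContinuous_of_continuous f.continuous) (ε/2)
        (by positivity)
      obtain ⟨N, hN⟩ := exists_nat_one_div_lt hr₀
      refine ⟨N, fun n hn => ?_⟩
      have hmod : ∀ a b : X, dist a b < 1/(n+1) → |f a - f b| ≤ ε/2 := by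
        intro a b hab
        have h1 : (1:ℝ)/(n+1) ≤ 1/(N+1) := by
          apply one_div_le_one_div_of_le (by positivity)
          exact_mod_cast Nat.add_le_add_right hn 1
        have : dist a b < r₀ := lt_of_lt_of_le hab (le_of_lt (lt_of_le_of_lt h1 hN))
        have := hfr this
        rw [Real.dist_eq] at this
        exact this.le
      have := hν2 n f (ε/2) (by positivity) hmod
      rw [Real.dist_eq]
      exact lt_of_le_of_lt this (by linarith)
    exact mem_closure_of_tendsto htend (Filter.Eventually.of_forall hν1)
  · intro hμ
    have hcp : ClusterPt μ (Filter.principal T) := mem_closure_iff_clusterPt.mp hμ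
    haveI hne : (nhds μ ⊓ Filter.principal T).NeBot := hcp
    have htendid : Filter.Tendsto (id : ProbabilityMeasure X → ProbabilityMeasure X)
        (nhds μ ⊓ Filter.principal T) (nhds μ) := Filter.tendsto_id'.mpr inf_le_left
    have hport := ProbabilityMeasure.limsup_measure_closed_le_of_tendsto htendid
      (isClosed_closure : IsClosed C)
    have hev : ∀ᶠ ρ in (nhds μ ⊓ Filter.principal T),
        ((id ρ : ProbabilityMeasure X) : Measure X) C = 1 := by
      refine Filter.eventually_inf_principal.mpr (Filter.Eventually.of_forall ?_)
      intro ρ hρ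
      exact compat_full' hSfin hφ hρ
    have hlim : Filter.limsup (fun ρ : ProbabilityMeasure X =>
        ((id ρ : ProbabilityMeasure X) : Measure X) C) (nhds μ ⊓ Filter.principal T) = 1 := by
      rw [Filter.limsup_congr hev]
      exact Filter.limsup_const _
    rw [hlim] at hport
    exact le_antisymm prob_le_one hport
end
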